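/- Let A be the 5×5 row-stochastic matrix with rows: row 1 = e_5, row 2 = e_1, row 3 = (0.5, 0.5, 0, 0, 0), row 4 = e_3, row 5 = e_4. Then A is SIA, but the product A_3 A_2 A_1 A_4 A_5 of asynchronous iteration matrices equals a matrix that is not SIA (its graph is disconnected from being rooted-and-aperiodic; indeed the product matrix has rows 1,2,3,5 equal to e_4 and row 4 equal to e_3, forming a 2-cycle between nodes 3 and 4 in the limit). -/

import Mathlib

open Filter

/-- The asynchronous iteration matrix: row `σ` comes from `A`, others from identity. -/
def asyncM {N : ℕ} (A : Matrix (Fin N) (Fin N) ℝ) (σ : Fin N) : Matrix (Fin N) (Fin N) ℝ :=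
  Matrix.of fun i j => if i = σ then A i j else if i = j then 1 else 0

section Aux

noncomputable def Amat : Matrix (Fin 5) (Fin 5) ℝ :=
  !![0, 0, 0, 0, 1;
     1, 0, 0, 0, 0;
     1/2, 1/2, 0, 0, 0;
     0, 0, 1, 0, 0;
     0, 0, 0, 1, 0]

noncomputable def piv : Fin 5 → ℝ := ![2/9, 1/9, 2/9, 2/9, 2/9]

noncomputable def Pmat : Matrix (Fin 5) (Fin 5) ℝ := Matrix.of fun _ j => piv j

noncomputable def A2mat : Matrix (Fin 5) (Fin 5) ℝ :=
  !![0,0,0,1,0; 0,0,0,0,1; 1/2,0,0,0,1/2; 1/2,1/2,0,0,0; 0,0,1,0,0]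

noncomputable def A4mat : Matrix (Fin 5) (Fin 5) ℝ :=
  !![1/2,1/2,0,0,0; 0,0,1,0,0; 0,0,1/2,1/2,0; 0,0,0,1/2,1/2; 1/2,0,0,0,1/2]

noncomputable def A8mat : Matrix (Fin 5) (Fin 5) ℝ :=
  !![1/4,1/4,1/2,0,0; 0,0,1/2,1/2,0; 0,0,1/4,1/2,1/4; 1/4,0,0,1/4,1/2; 1/2,1/4,0,0,1/4]

noncomputable def A16mat : Matrix (Fin 5) (Fin 5) ℝ :=
  !![1/16,1/16,3/8,3/8,1/8; 1/8,0,1/8,3/8,3/8; 1/4,1/16,1/16,1/4,3/8;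
     3/8,3/16,1/8,1/16,1/4; 1/4,3/16,3/8,1/8,1/16]

noncomputable def Emat : Matrix (Fin 5) (Fin 5) ℝ := Amat - Pmat

lemma hAA : Amat * Amat = A2mat := by
  ext i j
  fin_cases i <;> fin_cases j <;>
    simp [Amat, A2mat, Matrix.mul_apply, Fin.sum_univ_five, Matrix.vecHead, Matrix.vecTail] <;>
    norm_num

lemma hA2A2 : A2mat * A2mat = A4mat := by
  ext i j
  fin_cases i <;> fin_cases j <;>
    simp [A2mat, A4mat, Matrix.mul_apply, Fin.sum_univ_five, Matrix.vecHead, Matrix.vecTail] <;>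
    norm_num

lemma hA4A4 : A4mat * A4mat = A8mat := by
  ext i j
  fin_cases i <;> fin_cases j <;>
    simp [A4mat, A8mat, Matrix.mul_apply, Fin.sum_univ_five, Matrix.vecHead, Matrix.vecTail] <;>
    norm_num

lemma hA8A8 : A8mat * A8mat = A16mat := by
  ext i j
  fin_cases i <;> fin_cases j <;>
    simp [A8mat, A16mat, Matrix.mul_apply, Fin.sum_univ_five, Matrix.vecHead, Matrix.vecTail] <;>
    norm_num

lemma hA16 : Amat ^ 16 = A16mat := by
  have h2 : Amat ^ 2 = A2mat := by rw [pow_two, hAA]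
  have h4 : Amat ^ 4 = A4mat := by
    rw [show (4 : ℕ) = 2 * 2 from rfl, pow_mul, h2, pow_two, hA2A2]
  have h8 : Amat ^ 8 = A8mat := by
    rw [show (8 : ℕ) = 4 * 2 from rfl, pow_mul, h4, pow_two, hA4A4]
  rw [show (16 : ℕ) = 8 * 2 from rfl, pow_mul, h8, pow_two, hA8A8]

lemma hPP : Pmat * Pmat = Pmat := by
  ext i j
  fin_cases i <;> fin_cases j <;>
    simp [Pmat, piv, Matrix.mul_apply, Fin.sum_univ_five, Matrix.vecHead, Matrix.vecTail] <;>
    norm_num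

lemma hAP : Amat * Pmat = Pmat := by
  ext i j
  fin_cases i <;> fin_cases j <;>
    simp [Amat, Pmat, piv, Matrix.mul_apply, Fin.sum_univ_five, Matrix.vecHead, Matrix.vecTail] <;>
    norm_num

lemma hPA : Pmat * Amat = Pmat := by
  ext i j
  fin_cases i <;> fin_cases j <;>
    simp [Amat, Pmat, piv, Matrix.mul_apply, Fin.sum_univ_five, Matrix.vecHead, Matrix.vecTail] <;>
    norm_num

lemma hEP : Emat * Pmat = 0 := by
  rw [Emat, Matrix.sub_mul, hAP, hPP, sub_self]

lemma hEnP : ∀ n : ℕ, Emat ^ (n + 1) * Pmat = 0 := by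
  intro n
  induction n with
  | zero => simpa using hEP
  | succ n ih =>
      rw [pow_succ, mul_assoc, hEP, mul_zero]

lemma hAn : ∀ n : ℕ, Amat ^ (n + 1) = Pmat + Emat ^ (n + 1) := by
  intro n
  induction n with
  | zero => simp [Emat]
  | succ n ih =>
      rw [pow_succ, ih, add_mul]
      have h1 : Pmat * Amat = Pmat := hPA
      have h2 : Emat ^ (n + 1) * Amat = Emat ^ (n + 2) := by
        have hPE : Pmat + Emat = Amat := by rw [Emat]; abel
        rw [← hPE, mul_add, hEnP, zero_add, ← pow_succ]
      rw [h1, h2]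

lemma hA0 : ∀ i j, 0 ≤ Amat i j := by
  intro i j
  fin_cases i <;> fin_cases j <;>
    norm_num [Amat, Matrix.vecHead, Matrix.vecTail]

lemma hA1 : ∀ i, ∑ j, Amat i j = 1 := by
  intro i
  fin_cases i <;>
    norm_num [Amat, Fin.sum_univ_five, Matrix.vecHead, Matrix.vecTail, Matrix.cons_val_two, Matrix.cons_val_three, Matrix.cons_val_four]

lemma bound01 : ∀ n : ℕ, ∀ i j, 0 ≤ (Amat ^ n) i j ∧ (Amat ^ n) i j ≤ 1 := by
  intro n
  induction n with
  | zero =>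
      intro i j
      by_cases h : i = j <;> simp [Matrix.one_apply, h]
  | succ n ih =>
      intro i j
      rw [pow_succ']
      rw [Matrix.mul_apply]
      constructor
      · exact Finset.sum_nonneg fun k _ => mul_nonneg (hA0 i k) (ih k j).1
      · calc ∑ k, Amat i k * (Amat ^ n) k j
            ≤ ∑ k, Amat i k * 1 :=
              Finset.sum_le_sum fun k _ => mul_le_mul_of_nonneg_left (ih k j).2 (hA0 i k)
          _ = 1 := by simpa using hA1 i

lemma hpiv01 : ∀ j, 0 ≤ piv j ∧ piv j ≤ 1 := by
  intro j
  fin_cases j <;> norm_num [piv]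

lemma hEbound : ∀ n : ℕ, ∀ i j, |(Emat ^ n) i j| ≤ 1 := by
  intro n
  cases n with
  | zero =>
      intro i j
      by_cases h : i = j <;> simp [Matrix.one_apply, h]
  | succ n =>
      intro i j
      have h1 : Emat ^ (n + 1) = Amat ^ (n + 1) - Pmat := by
        rw [hAn n]; abel
      rw [h1]
      have h2 := bound01 (n + 1) i j
      have h3 := hpiv01 j
      have h4 : (Amat ^ (n+1) - Pmat) i j = (Amat ^ (n+1)) i j - piv j := rfl
      rw [h4]
      exact abs_le.2 ⟨by linarith [h2.1, h3.2], by linarith [h2.2, h3.1]⟩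

lemma hE16row : ∀ i, ∑ j, |(Emat ^ 16) i j| ≤ 11 / 18 := by
  have h1 : Emat ^ 16 = A16mat - Pmat := by
    have h := hAn 15
    norm_num at h
    rw [hA16] at h
    rw [h]; abel
  intro i
  rw [h1]
  fin_cases i <;>
    · rw [Fin.sum_univ_five]
      simp only [A16mat, Pmat, piv, Matrix.sub_apply, Matrix.of_apply, Matrix.cons_val',
        Matrix.cons_val_zero, Matrix.cons_val_one, Matrix.head_cons, Matrix.empty_val',
        Matrix.cons_val_fin_one, Matrix.head_fin_const, Matrix.cons_val_two, Matrix.vecHead,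
        Matrix.vecTail, Matrix.cons_val_three, Matrix.cons_val_four, Function.comp]
      simp only [abs_eq_max_neg, max_def]
      norm_num [Matrix.cons_val_two, Matrix.cons_val_three, Matrix.cons_val_four]

lemma hQbound : ∀ k : ℕ, ∀ i j, |((Emat ^ 16) ^ k) i j| ≤ (11 / 18 : ℝ) ^ k := by
  intro k
  induction k with
  | zero =>
      intro i j
      by_cases h : i = j <;> simp [Matrix.one_apply, h]
  | succ k ih =>
      intro i j
      rw [pow_succ', Matrix.mul_apply]
      calc |∑ l, (Emat ^ 16) i l * ((Emat ^ 16) ^ k) l j|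
          ≤ ∑ l, |(Emat ^ 16) i l * ((Emat ^ 16) ^ k) l j| := Finset.abs_sum_le_sum_abs _ _
        _ = ∑ l, |(Emat ^ 16) i l| * |((Emat ^ 16) ^ k) l j| := by simp [abs_mul]
        _ ≤ ∑ l, |(Emat ^ 16) i l| * (11 / 18 : ℝ) ^ k :=
            Finset.sum_le_sum fun l _ => mul_le_mul_of_nonneg_left (ih l j) (abs_nonneg _)
        _ = (∑ l, |(Emat ^ 16) i l|) * (11 / 18 : ℝ) ^ k := (Finset.sum_mul _ _ _).symm
        _ ≤ (11 / 18 : ℝ) * (11 / 18 : ℝ) ^ k :=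
            mul_le_mul_of_nonneg_right (hE16row i) (pow_nonneg (by norm_num) k)
        _ = (11 / 18 : ℝ) ^ (k + 1) := (pow_succ' _ _).symm

lemma hmain : ∀ n : ℕ, ∀ i j, |(Emat ^ n) i j| ≤ 5 * (11 / 18 : ℝ) ^ (n / 16) := by
  intro n i j
  have hn : Emat ^ n = (Emat ^ 16) ^ (n / 16) * Emat ^ (n % 16) := by
    rw [← pow_mul, ← pow_add]
    congr 1
    omega
  rw [hn, Matrix.mul_apply]
  calc |∑ l, ((Emat ^ 16) ^ (n / 16)) i l * (Emat ^ (n % 16)) l j|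
      ≤ ∑ l, |((Emat ^ 16) ^ (n / 16)) i l * (Emat ^ (n % 16)) l j| :=
        Finset.abs_sum_le_sum_abs _ _
    _ = ∑ l, |((Emat ^ 16) ^ (n / 16)) i l| * |(Emat ^ (n % 16)) l j| := by simp [abs_mul]
    _ ≤ ∑ _l : Fin 5, (11 / 18 : ℝ) ^ (n / 16) * 1 :=
        Finset.sum_le_sum fun l _ =>
          mul_le_mul (hQbound _ i l) (hEbound _ l j) (abs_nonneg _)
            (pow_nonneg (by norm_num) _)
    _ = 5 * (11 / 18 : ℝ) ^ (n / 16) := by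
        simp [Finset.sum_const, Finset.card_univ]

lemma htendsto_entry : ∀ i j, Tendsto (fun n => (Amat ^ n) i j) atTop (nhds (piv j)) := by
  intro i j
  rw [← tendsto_sub_nhds_zero_iff]
  have hg : Tendsto (fun n : ℕ => 5 * (11 / 18 : ℝ) ^ (n / 16)) atTop (nhds 0) := by
    have hdiv : Tendsto (fun n : ℕ => n / 16) atTop atTop :=
      tendsto_atTop_atTop.2 fun b =>
        ⟨16 * b, fun n hn => (Nat.le_div_iff_mul_le (by norm_num)).2 (by omega)⟩
    have hpow : Tendsto (fun k : ℕ => (11 / 18 : ℝ) ^ k) atTop (nhds 0) :=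
      tendsto_pow_atTop_nhds_zero_of_lt_one (by norm_num) (by norm_num)
    have := (hpow.comp hdiv).const_mul (5 : ℝ)
    simpa using this
  apply squeeze_zero_norm _ hg
  intro n
  rw [Real.norm_eq_abs]
  cases n with
  | zero =>
      have h3 := hpiv01 j
      have h2 := bound01 0 i j
      calc |(Amat ^ 0) i j - piv j| ≤ 1 :=
            abs_le.2 ⟨by linarith [h2.1, h3.2], by linarith [h2.2, h3.1]⟩
        _ ≤ 5 * (11 / 18 : ℝ) ^ (0 / 16 : ℕ) := by norm_num
  | succ n =>
      have h1 : (Amat ^ (n+1)) i j - piv j = (Emat ^ (n+1)) i j := by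
        rw [hAn n]
        show piv j + (Emat ^ (n+1)) i j - piv j = _
        ring
      rw [h1]
      exact hmain (n + 1) i j

-- part 2 matrices
noncomputable def N2 : Matrix (Fin 5) (Fin 5) ℝ :=
  !![1,0,0,0,0; 0,1,0,0,0; 1/2,1/2,0,0,0; 0,0,0,1,0; 0,0,0,0,1]
noncomputable def N1 : Matrix (Fin 5) (Fin 5) ℝ :=
  !![1,0,0,0,0; 1,0,0,0,0; 0,0,1,0,0; 0,0,0,1,0; 0,0,0,0,1]
noncomputable def N0 : Matrix (Fin 5) (Fin 5) ℝ :=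
  !![0,0,0,0,1; 0,1,0,0,0; 0,0,1,0,0; 0,0,0,1,0; 0,0,0,0,1]
noncomputable def N3 : Matrix (Fin 5) (Fin 5) ℝ :=
  !![1,0,0,0,0; 0,1,0,0,0; 0,0,1,0,0; 0,0,1,0,0; 0,0,0,0,1]
noncomputable def N4 : Matrix (Fin 5) (Fin 5) ℝ :=
  !![1,0,0,0,0; 0,1,0,0,0; 0,0,1,0,0; 0,0,0,1,0; 0,0,0,1,0]
noncomputable def Q1 : Matrix (Fin 5) (Fin 5) ℝ :=
  !![1,0,0,0,0; 1,0,0,0,0; 1,0,0,0,0; 0,0,0,1,0; 0,0,0,0,1]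
noncomputable def Q2 : Matrix (Fin 5) (Fin 5) ℝ :=
  !![0,0,0,0,1; 0,0,0,0,1; 0,0,0,0,1; 0,0,0,1,0; 0,0,0,0,1]
noncomputable def Q3 : Matrix (Fin 5) (Fin 5) ℝ :=
  !![0,0,0,0,1; 0,0,0,0,1; 0,0,0,0,1; 0,0,1,0,0; 0,0,0,0,1]
noncomputable def Bmat : Matrix (Fin 5) (Fin 5) ℝ :=
  !![0,0,0,1,0; 0,0,0,1,0; 0,0,0,1,0; 0,0,1,0,0; 0,0,0,1,0]
noncomputable def B2mat : Matrix (Fin 5) (Fin 5) ℝ :=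
  !![0,0,1,0,0; 0,0,1,0,0; 0,0,1,0,0; 0,0,0,1,0; 0,0,1,0,0]

lemma hasync2 : asyncM Amat 2 = N2 := by
  ext i j
  fin_cases i <;> fin_cases j <;>
    norm_num [asyncM, Amat, N2, Matrix.vecHead, Matrix.vecTail, Fin.ext_iff] <;> decide

lemma hasync1 : asyncM Amat 1 = N1 := by
  ext i j
  fin_cases i <;> fin_cases j <;>
    norm_num [asyncM, Amat, N1, Matrix.vecHead, Matrix.vecTail, Fin.ext_iff] <;> decide

lemma hasync0 : asyncM Amat 0 = N0 := by
  ext i j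
  fin_cases i <;> fin_cases j <;>
    simp [asyncM, Amat, N0]

lemma hasync3 : asyncM Amat 3 = N3 := by
  ext i j
  fin_cases i <;> fin_cases j <;>
    norm_num [asyncM, Amat, N3, Matrix.vecHead, Matrix.vecTail, Fin.ext_iff] <;> decide

lemma hasync4 : asyncM Amat 4 = N4 := by
  ext i j
  fin_cases i <;> fin_cases j <;>
    norm_num [asyncM, Amat, N4, Matrix.vecHead, Matrix.vecTail, Fin.ext_iff] <;> decide

lemma hprod1 : N2 * N1 = Q1 := by
  ext i j
  fin_cases i <;> fin_cases j <;>
    norm_num [N2, N1, Q1, Matrix.mul_apply, Fin.sum_univ_five, Matrix.vecHead, Matrix.vecTail, Matrix.cons_val_two, Matrix.cons_val_three, Matrix.cons_val_four]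

lemma hprod2 : Q1 * N0 = Q2 := by
  ext i j
  fin_cases i <;> fin_cases j <;>
    norm_num [Q1, N0, Q2, Matrix.mul_apply, Fin.sum_univ_five, Matrix.vecHead, Matrix.vecTail, Matrix.cons_val_two, Matrix.cons_val_three, Matrix.cons_val_four]

lemma hprod3 : Q2 * N3 = Q3 := by
  ext i j
  fin_cases i <;> fin_cases j <;>
    norm_num [Q2, N3, Q3, Matrix.mul_apply, Fin.sum_univ_five, Matrix.vecHead, Matrix.vecTail, Matrix.cons_val_two, Matrix.cons_val_three, Matrix.cons_val_four]

lemma hprod4 : Q3 * N4 = Bmat := by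
  ext i j
  fin_cases i <;> fin_cases j <;>
    norm_num [Q3, N4, Bmat, Matrix.mul_apply, Fin.sum_univ_five, Matrix.vecHead, Matrix.vecTail, Matrix.cons_val_two, Matrix.cons_val_three, Matrix.cons_val_four]

lemma hBB : Bmat * Bmat = B2mat := by
  ext i j
  fin_cases i <;> fin_cases j <;>
    norm_num [Bmat, B2mat, Matrix.mul_apply, Fin.sum_univ_five, Matrix.vecHead, Matrix.vecTail, Matrix.cons_val_two, Matrix.cons_val_three, Matrix.cons_val_four]

lemma hBB2 : Bmat * B2mat = Bmat := by
  ext i j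
  fin_cases i <;> fin_cases j <;>
    norm_num [Bmat, B2mat, Matrix.mul_apply, Fin.sum_univ_five, Matrix.vecHead, Matrix.vecTail, Matrix.cons_val_two, Matrix.cons_val_three, Matrix.cons_val_four]

lemma hodd : ∀ k : ℕ, Bmat ^ (2 * k + 1) = Bmat := by
  intro k
  induction k with
  | zero => simp
  | succ k ih =>
      have : 2 * (k + 1) + 1 = (2 * k + 1) + 2 := by ring
      rw [this, pow_add, ih, pow_two, hBB, hBB2]

lemma heven : ∀ k : ℕ, Bmat ^ (2 * k + 2) = B2mat := by
  intro k
  have : 2 * k + 2 = (2 * k + 1) + 1 := by ring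
  rw [this, pow_succ, hodd, hBB]

lemma hB32 : Bmat 3 2 = 1 := by norm_num [Bmat, Matrix.vecHead, Matrix.vecTail, Matrix.cons_val_two, Matrix.cons_val_three, Matrix.cons_val_four]
lemma hB232 : B2mat 3 2 = 0 := by norm_num [B2mat, Matrix.vecHead, Matrix.vecTail, Matrix.cons_val_two, Matrix.cons_val_three, Matrix.cons_val_four]

end Aux

/-- The given `5×5` SIA matrix admits an asynchronous product `A₃A₂A₁A₄A₅` that is
not SIA. -/
theorem SIA_async_product_not_SIA :
    let A : Matrix (Fin 5) (Fin 5) ℝ :=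
      !![0, 0, 0, 0, 1;
         1, 0, 0, 0, 0;
         1/2, 1/2, 0, 0, 0;
         0, 0, 1, 0, 0;
         0, 0, 0, 1, 0]
    let B : Matrix (Fin 5) (Fin 5) ℝ :=
      !![0, 0, 0, 1, 0;
         0, 0, 0, 1, 0;
         0, 0, 0, 1, 0;
         0, 0, 1, 0, 0;
         0, 0, 0, 1, 0]
    (∃ ξ : Fin 5 → ℝ,
      Tendsto (fun k => A ^ k) atTop (nhds (Matrix.of fun _ j => ξ j))) ∧
    asyncM A 2 * asyncM A 1 * asyncM A 0 * asyncM A 3 * asyncM A 4 = B ∧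
    ¬ ∃ ξ : Fin 5 → ℝ,
      Tendsto (fun k => B ^ k) atTop (nhds (Matrix.of fun _ j => ξ j)) := by
  intro A B
  have eA : A = Amat := rfl
  have eB : B = Bmat := rfl
  refine ⟨⟨piv, ?_⟩, ?_, ?_⟩
  · rw [eA]
    exact tendsto_pi_nhds.2 fun i => tendsto_pi_nhds.2 fun j => htendsto_entry i j
  · rw [eA, eB, hasync2, hasync1, hasync0, hasync3, hasync4, hprod1, hprod2, hprod3, hprod4]
  · rw [eB]
    rintro ⟨ξ, h⟩
    have h32 : Tendsto (fun k => (Bmat ^ k) 3 2) atTop (nhds (ξ 2)) := by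
      have := (tendsto_pi_nhds.1 ((tendsto_pi_nhds.1 h) 3)) 2
      exact this
    have hoddc : Tendsto (fun k : ℕ => 2 * k + 1) atTop atTop :=
      tendsto_atTop_atTop.2 fun b => ⟨b, fun n hn => by omega⟩
    have hevenc : Tendsto (fun k : ℕ => 2 * k + 2) atTop atTop :=
      tendsto_atTop_atTop.2 fun b => ⟨b, fun n hn => by omega⟩
    have h1 : ξ 2 = 1 := by
      have := h32.comp hoddc
      have h2 : (fun k : ℕ => (Bmat ^ (2 * k + 1)) 3 2) = fun _ => (1 : ℝ) := by
        funext k; rw [hodd k, hB32]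
      rw [show ((fun k => (Bmat ^ k) 3 2) ∘ fun k : ℕ => 2 * k + 1) =
          fun k : ℕ => (Bmat ^ (2 * k + 1)) 3 2 from rfl, h2] at this
      exact tendsto_nhds_unique this tendsto_const_nhds
    have h0 : ξ 2 = 0 := by
      have := h32.comp hevenc
      have h2 : (fun k : ℕ => (Bmat ^ (2 * k + 2)) 3 2) = fun _ => (0 : ℝ) := by
        funext k; rw [heven k, hB232]
      rw [show ((fun k => (Bmat ^ k) 3 2) ∘ fun k : ℕ => 2 * k + 2) =
          fun k : ℕ => (Bmat ^ (2 * k + 2)) 3 2 from rfl, h2] at this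
      exact tendsto_nhds_unique this tendsto_const_nhds
    rw [h1] at h0
    norm_num at h0
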